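/- With Ω₁ = (-1,0)×(0,1), Ω₂ = (0,1)², and ψ_m(x₁,x₂) = sin(πm x₂) sinh(πm(1−|x₁|))/sinh(πm), the Dirichlet inner product satisfies ∫_Ω ∇ψ_n · ∇ψ_m = 0 for n ≠ m, and ∫_Ω |∇ψ_m|² = πm sinh(2πm) / (2 sinh²(πm)). -/

import Mathlib

open Real MeasureTheory

/-- `ψ_m(x₁,x₂) = sin(πm x₂) sinh(πm(1-|x₁|)) / sinh(πm)` viewed as a function on `ℝ × ℝ`. -/
noncomputable def psi (m : ℕ) (p : ℝ × ℝ) : ℝ :=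
  Real.sin (π * m * p.2) * Real.sinh (π * m * (1 - |p.1|)) / Real.sinh (π * m)

/-- Pointwise dot product of the gradients of two functions on `ℝ × ℝ`. -/
noncomputable def gradDot (u v : ℝ × ℝ → ℝ) (p : ℝ × ℝ) : ℝ :=
  fderiv ℝ u p (1, 0) * fderiv ℝ v p (1, 0) + fderiv ℝ u p (0, 1) * fderiv ℝ v p (0, 1)

/-- Ω = (-1,1) × (0,1). -/
def Omega : Set (ℝ × ℝ) := (Set.Ioo (-1 : ℝ) 1) ×ˢ (Set.Ioo (0 : ℝ) 1)


lemma coshsq (t : ℝ) : Real.cosh t * Real.cosh t + Real.sinh t * Real.sinh t = Real.cosh (2*t) := by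
  nlinarith [Real.sinh_sq t, Real.cosh_two_mul t]

lemma intCos (r : ℝ) (hr : r ≠ 0) : ∫ y in (0:ℝ)..1, Real.cos (r*y) = Real.sin r / r := by
  have h : ∀ y ∈ Set.uIcc (0:ℝ) 1, HasDerivAt (fun t => Real.sin (r*t) / r) (Real.cos (r*y)) y := by
    intro y _
    have h1 : HasDerivAt (fun t : ℝ => r * t) r y := by simpa using (hasDerivAt_id y).const_mul r
    have h2 := (Real.hasDerivAt_sin (r*y)).comp y h1
    have := h2.div_const r
    exact this.congr_deriv (by rw [mul_div_assoc, div_self hr, mul_one])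
  rw [intervalIntegral.integral_eq_sub_of_hasDerivAt h
    (Continuous.intervalIntegrable (by continuity) _ _)]
  simp

lemma intCoshSub (c : ℝ) (hc : c ≠ 0) :
    ∫ x in (0:ℝ)..1, Real.cosh (c*(1-x)) = Real.sinh c / c := by
  have h : ∀ y ∈ Set.uIcc (0:ℝ) 1, HasDerivAt (fun t => -(Real.sinh (c*(1-t)) / c)) (Real.cosh (c*(1-y))) y := by
    intro y _
    have h1 : HasDerivAt (fun t : ℝ => c * (1 - t)) (c * (-1)) y :=
      ((hasDerivAt_id y).const_sub 1).const_mul c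
    have h2 := (Real.hasDerivAt_sinh (c*(1-y))).comp y h1
    have := (h2.div_const c).neg
    exact this.congr_deriv (by rw [mul_neg_one, mul_neg, neg_div, neg_neg, mul_div_assoc, div_self hc, mul_one])
  rw [intervalIntegral.integral_eq_sub_of_hasDerivAt h
    (Continuous.intervalIntegrable (by continuity) _ _)]
  simp

lemma intCoshAdd (c : ℝ) (hc : c ≠ 0) :
    ∫ x in (-1:ℝ)..0, Real.cosh (c*(1+x)) = Real.sinh c / c := by
  have h : ∀ y ∈ Set.uIcc (-1:ℝ) 0, HasDerivAt (fun t => Real.sinh (c*(1+t)) / c) (Real.cosh (c*(1+y))) y := by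
    intro y _
    have h1 : HasDerivAt (fun t : ℝ => c * (1 + t)) (c * 1) y :=
      ((hasDerivAt_id y).const_add 1).const_mul c
    have h2 := (Real.hasDerivAt_sinh (c*(1+y))).comp y h1
    have := h2.div_const c
    exact this.congr_deriv (by rw [mul_one, mul_div_assoc, div_self hc, mul_one])
  rw [intervalIntegral.integral_eq_sub_of_hasDerivAt h
    (Continuous.intervalIntegrable (by continuity) _ _)]
  simp

lemma sinPiInt (k : ℤ) : Real.sin (π * k) = 0 := by rw [mul_comm]; exact Real.sin_int_mul_pi k

lemma sinPiNatSub (n m : ℕ) : Real.sin (π * ((n:ℝ) - m)) = 0 := by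
  have : ((n:ℝ) - m) = ((n - m : ℤ) : ℝ) := by push_cast; ring
  rw [this]; exact sinPiInt _

lemma sinPiNatAdd (n m : ℕ) : Real.sin (π * ((n:ℝ) + m)) = 0 := by
  have : ((n:ℝ) + m) = ((n + m : ℤ) : ℝ) := by push_cast; ring
  rw [this]; exact sinPiInt _

lemma intSinSin (n m : ℕ) (hn : 0 < n) (hm : 0 < m) :
    ∫ y in (0:ℝ)..1, Real.sin (π*n*y) * Real.sin (π*m*y) = if n = m then 1/2 else 0 := by
  have key : ∀ y : ℝ, Real.sin (π*n*y) * Real.sin (π*m*y)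
      = (Real.cos ((π*((n:ℝ)-m))*y) - Real.cos ((π*((n:ℝ)+m))*y))/2 := by
    intro y
    have e1 : (π*((n:ℝ)-m))*y = π*n*y - π*m*y := by ring
    have e2 : (π*((n:ℝ)+m))*y = π*n*y + π*m*y := by ring
    rw [e1, e2, Real.cos_sub, Real.cos_add]; ring
  simp_rw [key]
  rw [intervalIntegral.integral_div,
    intervalIntegral.integral_sub (Continuous.intervalIntegrable (by continuity) _ _)
      (Continuous.intervalIntegrable (by continuity) _ _)]
  by_cases h : n = m
  · subst h
    have h2 : (π*((n:ℝ)+n)) ≠ 0 := by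
      have : (0:ℝ) < (n:ℝ) + n := by positivity
      positivity
    rw [if_pos rfl]
    rw [intCos _ h2, sinPiNatAdd]
    simp
  · have h1 : (π*((n:ℝ)-m)) ≠ 0 := by
      have : (n:ℝ) ≠ (m:ℝ) := by exact_mod_cast h
      have : (n:ℝ) - m ≠ 0 := sub_ne_zero.mpr this
      exact mul_ne_zero Real.pi_ne_zero this
    have h2 : (π*((n:ℝ)+m)) ≠ 0 := by
      have : (0:ℝ) < (n:ℝ) + m := by positivity
      positivity
    rw [if_neg h, intCos _ h1, intCos _ h2, sinPiNatSub, sinPiNatAdd]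
    simp

lemma intCosCos (n m : ℕ) (hn : 0 < n) (hm : 0 < m) :
    ∫ y in (0:ℝ)..1, Real.cos (π*n*y) * Real.cos (π*m*y) = if n = m then 1/2 else 0 := by
  have key : ∀ y : ℝ, Real.cos (π*n*y) * Real.cos (π*m*y)
      = (Real.cos ((π*((n:ℝ)-m))*y) + Real.cos ((π*((n:ℝ)+m))*y))/2 := by
    intro y
    have e1 : (π*((n:ℝ)-m))*y = π*n*y - π*m*y := by ring
    have e2 : (π*((n:ℝ)+m))*y = π*n*y + π*m*y := by ring
    rw [e1, e2, Real.cos_sub, Real.cos_add]; ring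
  simp_rw [key]
  rw [intervalIntegral.integral_div,
    intervalIntegral.integral_add (Continuous.intervalIntegrable (by continuity) _ _)
      (Continuous.intervalIntegrable (by continuity) _ _)]
  by_cases h : n = m
  · subst h
    have h2 : (π*((n:ℝ)+n)) ≠ 0 := by
      have : (0:ℝ) < (n:ℝ) + n := by positivity
      positivity
    rw [if_pos rfl, intCos _ h2, sinPiNatAdd]
    simp
  · have h1 : (π*((n:ℝ)-m)) ≠ 0 := by
      have : (n:ℝ) ≠ (m:ℝ) := by exact_mod_cast h
      have : (n:ℝ) - m ≠ 0 := sub_ne_zero.mpr this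
      exact mul_ne_zero Real.pi_ne_zero this
    have h2 : (π*((n:ℝ)+m)) ≠ 0 := by
      have : (0:ℝ) < (n:ℝ) + m := by positivity
      positivity
    rw [if_neg h, intCos _ h1, intCos _ h2, sinPiNatSub, sinPiNatAdd]
    simp


noncomputable def Fnm (n m : ℕ) (p : ℝ × ℝ) : ℝ :=
  (π*n*(π*m))/(Real.sinh (π*n)*Real.sinh (π*m)) *
    (Real.sin (π*n*p.2) * Real.sin (π*m*p.2) * (Real.cosh (π*n*(1-|p.1|)) * Real.cosh (π*m*(1-|p.1|)))
     + Real.cos (π*n*p.2) * Real.cos (π*m*p.2) * (Real.sinh (π*n*(1-|p.1|)) * Real.sinh (π*m*(1-|p.1|))))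

lemma grad_g (a s : ℝ) (p : ℝ × ℝ) :
    ∃ L : ℝ × ℝ →L[ℝ] ℝ,
      HasFDerivAt (fun q : ℝ × ℝ => Real.sin (a * q.2) * Real.sinh (a * (1 - s * q.1)) / Real.sinh a) L p
      ∧ L (1, 0) = -(s * a) * Real.cosh (a * (1 - s * p.1)) * Real.sin (a * p.2) / Real.sinh a
      ∧ L (0, 1) = a * Real.cos (a * p.2) * Real.sinh (a * (1 - s * p.1)) / Real.sinh a := by
  have hfst : HasFDerivAt (fun q : ℝ × ℝ => q.1) (ContinuousLinearMap.fst ℝ ℝ ℝ) p :=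
    (ContinuousLinearMap.fst ℝ ℝ ℝ).hasFDerivAt
  have hsnd : HasFDerivAt (fun q : ℝ × ℝ => q.2) (ContinuousLinearMap.snd ℝ ℝ ℝ) p :=
    (ContinuousLinearMap.snd ℝ ℝ ℝ).hasFDerivAt
  have h1 := (Real.hasDerivAt_sin (a * p.2)).comp_hasFDerivAt p (hsnd.const_mul a)
  have h2 := (Real.hasDerivAt_sinh (a * (1 - s * p.1))).comp_hasFDerivAt p
    (((hfst.const_mul s).const_sub 1).const_mul a)
  simp only [div_eq_mul_inv]
  refine ⟨_, (h1.mul h2).mul_const (Real.sinh a)⁻¹, ?_, ?_⟩ <;>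
    · simp
      ring

lemma psi_eventually_pos (k : ℕ) (p : ℝ × ℝ) (h : 0 < p.1) :
    psi k =ᶠ[nhds p] (fun q : ℝ × ℝ => Real.sin ((π*k) * q.2) * Real.sinh ((π*k) * (1 - 1 * q.1)) / Real.sinh (π*k)) := by
  have hU : {q : ℝ × ℝ | 0 < q.1} ∈ nhds p := (isOpen_lt continuous_const continuous_fst).mem_nhds h
  filter_upwards [hU] with q hq
  simp only [psi, abs_of_pos hq]
  ring_nf

lemma psi_eventually_neg (k : ℕ) (p : ℝ × ℝ) (h : p.1 < 0) :
    psi k =ᶠ[nhds p] (fun q : ℝ × ℝ => Real.sin ((π*k) * q.2) * Real.sinh ((π*k) * (1 - (-1) * q.1)) / Real.sinh (π*k)) := by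
  have hU : {q : ℝ × ℝ | q.1 < 0} ∈ nhds p := (isOpen_lt continuous_fst continuous_const).mem_nhds h
  filter_upwards [hU] with q hq
  simp only [psi, abs_of_neg hq]
  ring_nf

lemma gradDot_eq (n m : ℕ) (p : ℝ × ℝ) (hp : p.1 ≠ 0) :
    gradDot (psi n) (psi m) p = Fnm n m p := by
  rcases hp.lt_or_gt with h | h
  · obtain ⟨Ln, hLn, hLn1, hLn2⟩ := grad_g (π * n) (-1) p
    obtain ⟨Lm, hLm, hLm1, hLm2⟩ := grad_g (π * m) (-1) p
    have hn' : HasFDerivAt (psi n) Ln p := hLn.congr_of_eventuallyEq (psi_eventually_neg n p h)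
    have hm' : HasFDerivAt (psi m) Lm p := hLm.congr_of_eventuallyEq (psi_eventually_neg m p h)
    rw [gradDot, hn'.fderiv, hm'.fderiv, hLn1, hLm1, hLn2, hLm2, Fnm, abs_of_neg h]
    ring_nf
  · obtain ⟨Ln, hLn, hLn1, hLn2⟩ := grad_g (π * n) 1 p
    obtain ⟨Lm, hLm, hLm1, hLm2⟩ := grad_g (π * m) 1 p
    have hn' : HasFDerivAt (psi n) Ln p := hLn.congr_of_eventuallyEq (psi_eventually_pos n p h)
    have hm' : HasFDerivAt (psi m) Lm p := hLm.congr_of_eventuallyEq (psi_eventually_pos m p h)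
    rw [gradDot, hn'.fderiv, hm'.fderiv, hLn1, hLm1, hLn2, hLm2, Fnm, abs_of_pos h]
    ring_nf

lemma cont_Fnm (n m : ℕ) : Continuous (Fnm n m) := by
  unfold Fnm
  fun_prop

lemma integrableOn_Fnm (n m : ℕ) : IntegrableOn (Fnm n m) Omega := by
  have hsub : Omega ⊆ Set.Icc ((-1 : ℝ), (0:ℝ)) ((1:ℝ), (1:ℝ)) := by
    rintro ⟨x, y⟩ ⟨hx, hy⟩
    constructor
    · exact ⟨le_of_lt hx.1, le_of_lt hy.1⟩
    · exact ⟨le_of_lt hx.2, le_of_lt hy.2⟩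
  exact (((cont_Fnm n m).continuousOn).integrableOn_compact isCompact_Icc).mono_set hsub

lemma inner_int (n m : ℕ) (hn : 0 < n) (hm : 0 < m) (x : ℝ) :
    ∫ y in Set.Ioo (0:ℝ) 1, Fnm n m (x, y)
      = (if n = m then (1:ℝ)/2 else 0) *
        ((π*n*(π*m))/(Real.sinh (π*n)*Real.sinh (π*m)) *
          (Real.cosh (π*n*(1-|x|)) * Real.cosh (π*m*(1-|x|))
            + Real.sinh (π*n*(1-|x|)) * Real.sinh (π*m*(1-|x|)))) := by
  have h0 : ∫ y in Set.Ioo (0:ℝ) 1, Fnm n m (x, y) = ∫ y in (0:ℝ)..1, Fnm n m (x, y) := by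
    rw [intervalIntegral.integral_of_le zero_le_one, MeasureTheory.integral_Ioc_eq_integral_Ioo]
  set K := (π*n*(π*m))/(Real.sinh (π*n)*Real.sinh (π*m)) with hK
  set P := Real.cosh (π*n*(1-|x|)) * Real.cosh (π*m*(1-|x|)) with hP
  set Q := Real.sinh (π*n*(1-|x|)) * Real.sinh (π*m*(1-|x|)) with hQ
  have key : ∀ y : ℝ, Fnm n m (x, y)
      = (K*P) * (Real.sin (π*n*y) * Real.sin (π*m*y)) + (K*Q) * (Real.cos (π*n*y) * Real.cos (π*m*y)) := by
    intro y; simp only [Fnm, hK, hP, hQ]; ring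
  rw [h0]
  simp_rw [key]
  rw [intervalIntegral.integral_add
      ((Continuous.intervalIntegrable (by fun_prop) _ _))
      ((Continuous.intervalIntegrable (by fun_prop) _ _)),
    intervalIntegral.integral_const_mul, intervalIntegral.integral_const_mul,
    intSinSin n m hn hm, intCosCos n m hn hm]
  ring

lemma ae_ne_zero : ∀ᵐ p : ℝ × ℝ, p.1 ≠ 0 := by
  have hset : {p : ℝ × ℝ | p.1 = 0} = ({0} : Set ℝ) ×ˢ (Set.univ : Set ℝ) := by
    ext p
    simp only [Set.mem_setOf_eq, Set.mem_prod, Set.mem_singleton_iff, Set.mem_univ, and_true]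
  have h0 : (volume : Measure (ℝ × ℝ)) {p : ℝ × ℝ | p.1 = 0} = 0 := by
    rw [hset, MeasureTheory.Measure.volume_eq_prod, MeasureTheory.Measure.prod_prod]
    simp
  rw [MeasureTheory.ae_iff]
  simpa using h0

lemma integral_gradDot_eq (k l : ℕ) :
    ∫ p in Omega, gradDot (psi k) (psi l) p = ∫ p in Omega, Fnm k l p := by
  refine MeasureTheory.setIntegral_congr_ae
    (by exact measurableSet_Ioo.prod measurableSet_Ioo) ?_
  filter_upwards [ae_ne_zero] with p hp _
  exact gradDot_eq k l p hp

lemma omega_integral (k l : ℕ) :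
    ∫ p in Omega, Fnm k l p
      = ∫ x in Set.Ioo (-1:ℝ) 1, ∫ y in Set.Ioo (0:ℝ) 1, Fnm k l (x, y) := by
  exact MeasureTheory.setIntegral_prod (μ := (volume : Measure ℝ)) (ν := (volume : Measure ℝ))
    (Fnm k l) (integrableOn_Fnm k l)


theorem psi_dirichlet_orthogonality (n m : ℕ) (hn : 0 < n) (hm : 0 < m) :
    (n ≠ m → ∫ p in Omega, gradDot (psi n) (psi m) p = 0) ∧
    (∫ p in Omega, gradDot (psi m) (psi m) p
      = π * m * Real.sinh (2 * π * m) / (2 * (Real.sinh (π * m)) ^ 2)) := by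
  constructor
  · intro hne
    rw [integral_gradDot_eq, omega_integral n m]
    have h0 : ∀ x : ℝ, ∫ y in Set.Ioo (0:ℝ) 1, Fnm n m (x, y) = 0 := by
      intro x
      rw [inner_int n m hn hm x, if_neg hne]
      ring
    simp [h0]
  · rw [integral_gradDot_eq, omega_integral m m]
    have hm0 : ((m:ℝ)) ≠ 0 := Nat.cast_ne_zero.mpr hm.ne'
    have hc : (2*(π*(m:ℝ))) ≠ 0 := by positivity
    have hinner : ∀ x : ℝ, ∫ y in Set.Ioo (0:ℝ) 1, Fnm m m (x, y)
        = (π*m*(π*m))/(2*(Real.sinh (π*(m:ℝ)))^2) * Real.cosh (2*(π*(m:ℝ)*(1-|x|))) := by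
      intro x
      rw [inner_int m m hm hm x, if_pos rfl, coshsq (π*(m:ℝ)*(1-|x|))]
      ring
    simp_rw [hinner]
    have h1 : ∫ x in Set.Ioo (-1:ℝ) 1,
        (π*m*(π*m))/(2*(Real.sinh (π*(m:ℝ)))^2) * Real.cosh (2*(π*(m:ℝ)*(1-|x|)))
        = ∫ x in (-1:ℝ)..1,
        (π*m*(π*m))/(2*(Real.sinh (π*(m:ℝ)))^2) * Real.cosh (2*(π*(m:ℝ)*(1-|x|))) := by
      rw [intervalIntegral.integral_of_le (by norm_num : (-1:ℝ) ≤ 1),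
        MeasureTheory.integral_Ioc_eq_integral_Ioo]
    rw [h1, intervalIntegral.integral_const_mul]
    have hint1 : IntervalIntegrable (fun x : ℝ => Real.cosh (2*(π*(m:ℝ)*(1-|x|)))) volume (-1) 0 :=
      Continuous.intervalIntegrable (by fun_prop) _ _
    have hint2 : IntervalIntegrable (fun x : ℝ => Real.cosh (2*(π*(m:ℝ)*(1-|x|)))) volume 0 1 :=
      Continuous.intervalIntegrable (by fun_prop) _ _
    rw [← intervalIntegral.integral_add_adjacent_intervals hint1 hint2]
    have e1 : ∫ x in (-1:ℝ)..0, Real.cosh (2*(π*(m:ℝ)*(1-|x|)))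
        = ∫ x in (-1:ℝ)..0, Real.cosh ((2*(π*(m:ℝ)))*(1+x)) := by
      apply intervalIntegral.integral_congr
      intro x hx
      rw [Set.uIcc_of_le (by norm_num : (-1:ℝ) ≤ 0)] at hx
      simp only [abs_of_nonpos hx.2]
      ring_nf
    have e2 : ∫ x in (0:ℝ)..1, Real.cosh (2*(π*(m:ℝ)*(1-|x|)))
        = ∫ x in (0:ℝ)..1, Real.cosh ((2*(π*(m:ℝ)))*(1-x)) := by
      apply intervalIntegral.integral_congr
      intro x hx
      rw [Set.uIcc_of_le (by norm_num : (0:ℝ) ≤ 1)] at hx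
      simp only [abs_of_nonneg hx.1]
      ring_nf
    rw [e1, e2, intCoshAdd _ hc, intCoshSub _ hc]
    have hs : Real.sinh (π*(m:ℝ)) ≠ 0 := by
      rw [Real.sinh_ne_zero]
      positivity
    have h2 : Real.sinh (2*(π*(m:ℝ))) = Real.sinh (2*π*(m:ℝ)) := by ring_nf
    rw [h2]
    field_simp
    ring
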